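/- arXiv:2605.16593 — 3 statements merged into one kernel-verified Lean document; each statement's English description precedes it below -/
import Mathlib

section
/- Let f, g : X → ℝ be nonnegative measurable functions of a random variable X with finite second moments, and suppose E[g(X)] ≠ 0. Then P[f(X) ≥ g(X)] ≤ (E[f(X)] + (1/2)·√(Var[g(X)])) / E[g(X)]. -/
open MeasureTheory Filter

lemma cs_integrable_mul {Ω : Type*} [MeasurableSpace Ω] {μ : Measure Ω}
    {u v : Ω → ℝ} (hu : MemLp u 2 μ) (hv : MemLp v 2 μ) :
    Integrable (fun ω => u ω * v ω) μ := by
  have h : MemLp (u • v) 1 μ := hv.smul (p := 2) (q := 2) (r := 1) hu (hpqr := ⟨by simpa using ENNReal.inv_two_add_inv_two⟩)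
  rw [memLp_one_iff_integrable] at h
  exact h.congr (Eventually.of_forall fun ω => rfl)

set_option maxHeartbeats 1000000 in
/-- Cauchy–Schwarz for integrals. -/
lemma cs_integral {Ω : Type*} [MeasurableSpace Ω] (μ : Measure Ω)
    (u v : Ω → ℝ) (hu : MemLp u 2 μ) (hv : MemLp v 2 μ) :
    ∫ ω, u ω * v ω ∂μ ≤
      Real.sqrt (∫ ω, (u ω) ^ 2 ∂μ) * Real.sqrt (∫ ω, (v ω) ^ 2 ∂μ) := by
  have hpq : Real.HolderConjugate 2 2 := Real.holderConjugate_iff.mpr ⟨one_lt_two, by norm_num⟩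
  have hu' : MemLp u (ENNReal.ofReal 2) μ := by
    simpa [ENNReal.ofReal_ofNat] using hu
  have hv' : MemLp v (ENNReal.ofReal 2) μ := by
    simpa [ENNReal.ofReal_ofNat] using hv
  have h := integral_mul_norm_le_Lp_mul_Lq (μ := μ) hpq hu' hv'
  have hprod : Integrable (fun ω => u ω * v ω) μ := cs_integrable_mul hu hv
  have hle : ∫ ω, u ω * v ω ∂μ ≤ ∫ ω, ‖u ω‖ * ‖v ω‖ ∂μ := by
    refine integral_mono hprod
      (hprod.norm.congr (Eventually.of_forall fun ω => by
        simpa using norm_mul (u ω) (v ω)))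
      fun ω => ?_
    rw [← norm_mul, Real.norm_eq_abs]
    exact le_abs_self _
  have hequ : ∫ ω, ‖u ω‖ ^ (2:ℝ) ∂μ = ∫ ω, (u ω) ^ 2 ∂μ := by
    refine integral_congr_ae (Eventually.of_forall fun ω => ?_)
    show ‖u ω‖ ^ (2:ℝ) = (u ω) ^ 2
    rw [show (2:ℝ) = ((2:ℕ):ℝ) by norm_num, Real.rpow_natCast]
    simp [sq_abs]
  have heqv : ∫ ω, ‖v ω‖ ^ (2:ℝ) ∂μ = ∫ ω, (v ω) ^ 2 ∂μ := by
    refine integral_congr_ae (Eventually.of_forall fun ω => ?_)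
    show ‖v ω‖ ^ (2:ℝ) = (v ω) ^ 2
    rw [show (2:ℝ) = ((2:ℕ):ℝ) by norm_num, Real.rpow_natCast]
    simp [sq_abs]
  calc ∫ ω, u ω * v ω ∂μ ≤ ∫ ω, ‖u ω‖ * ‖v ω‖ ∂μ := hle
    _ ≤ (∫ ω, ‖u ω‖ ^ (2:ℝ) ∂μ) ^ ((1:ℝ)/2) * (∫ ω, ‖v ω‖ ^ (2:ℝ) ∂μ) ^ ((1:ℝ)/2) := h
    _ = Real.sqrt (∫ ω, (u ω) ^ 2 ∂μ) * Real.sqrt (∫ ω, (v ω) ^ 2 ∂μ) := by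
        rw [hequ, heqv, ← Real.sqrt_eq_rpow, ← Real.sqrt_eq_rpow]

set_option maxHeartbeats 1000000 in
/-- Generalized Markov inequality:
`P[f ≥ g] ≤ (E[f] + (1/2)·√(Var g)) / E[g]`. -/
theorem generalized_markov
    {Ω : Type*} [MeasurableSpace Ω] (μ : Measure Ω) [IsProbabilityMeasure μ]
    (f g : Ω → ℝ)
    (hf_meas : Measurable f) (hg_meas : Measurable g)
    (hf_nonneg : ∀ ω, 0 ≤ f ω) (hg_nonneg : ∀ ω, 0 ≤ g ω)
    (hf_int : Integrable f μ) (hf2_int : Integrable (fun ω => (f ω) ^ 2) μ)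
    (hg_int : Integrable g μ) (hg2_int : Integrable (fun ω => (g ω) ^ 2) μ)
    (hEg : ∫ ω, g ω ∂μ ≠ 0) :
    (μ {ω | f ω ≥ g ω}).toReal ≤
      ((∫ ω, f ω ∂μ) +
        (1 / 2) * Real.sqrt ((∫ ω, (g ω) ^ 2 ∂μ) - (∫ ω, g ω ∂μ) ^ 2)) /
      (∫ ω, g ω ∂μ) := by
  set A : Set Ω := {ω | f ω ≥ g ω} with hA
  have hAm : MeasurableSet A := measurableSet_le hg_meas hf_meas
  set p : ℝ := (μ A).toReal with hp
  set Eg : ℝ := ∫ ω, g ω ∂μ with hEgdef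
  have hEgpos : 0 < Eg := (integral_nonneg hg_nonneg).lt_of_ne' hEg
  have hp0 : 0 ≤ p := ENNReal.toReal_nonneg
  have hp1 : p ≤ 1 := by
    rw [hp, ← ENNReal.toReal_one]
    exact ENNReal.toReal_mono ENNReal.one_ne_top prob_le_one
  -- step 1 : ∫_A g ≤ ∫ f
  have hstep1 : ∫ ω in A, g ω ∂μ ≤ ∫ ω, f ω ∂μ :=
    (setIntegral_mono_on hg_int.integrableOn hf_int.integrableOn hAm
      fun ω hω => hω).trans (setIntegral_le_integral hf_int (ae_of_all _ hf_nonneg))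
  -- indicator
  set i : Ω → ℝ := A.indicator (fun _ => 1) with hi
  have hi_int : Integrable i μ := (integrable_const (1:ℝ)).indicator hAm
  have hi_eval : ∀ ω, i ω = if ω ∈ A then 1 else 0 := fun ω => by
    simp [hi, Set.indicator_apply]
  have hIint : ∫ ω, i ω ∂μ = p := by
    rw [hi, integral_indicator_const _ hAm]; simp [hp, measureReal_def]
  set u : Ω → ℝ := fun ω => Eg - g ω with hu
  set v : Ω → ℝ := fun ω => i ω - p with hv
  have hgL2 : MemLp g 2 μ :=
    (memLp_two_iff_integrable_sq hg_meas.aestronglyMeasurable).mpr hg2_int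
  have huL2 : MemLp u 2 μ := (memLp_const Eg).sub hgL2
  have hvL2 : MemLp v 2 μ := ((memLp_const (1:ℝ)).indicator hAm).sub (memLp_const p)
  have hu_int : Integrable u μ := (integrable_const Eg).sub hg_int
  have hEu : ∫ ω, u ω ∂μ = 0 := by
    rw [hu, integral_sub (integrable_const Eg) hg_int]
    simp [hEgdef]
  -- ∫ u v = p * Eg - ∫_A g
  have huv : ∫ ω, u ω * v ω ∂μ = p * Eg - ∫ ω in A, g ω ∂μ := by
    have heq : (fun ω => u ω * v ω) =
        fun ω => A.indicator u ω - p * u ω := by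
      funext ω
      by_cases hω : ω ∈ A <;> simp [hv, hi_eval, hω, Set.indicator_of_mem,
        Set.indicator_of_notMem, mul_comm] <;> ring
    have hAu : ∫ ω in A, u ω ∂μ = p * Eg - ∫ ω in A, g ω ∂μ := by
      rw [hu, integral_sub (integrable_const Eg).integrableOn hg_int.integrableOn,
        setIntegral_const]
      simp [hp, smul_eq_mul, measureReal_def]
    rw [heq, integral_sub (hu_int.indicator hAm) (hu_int.const_mul p),
      integral_indicator hAm, integral_const_mul, hEu, mul_zero, sub_zero, hAu]
  -- ∫ u² = Var
  have hu2 : ∫ ω, (u ω) ^ 2 ∂μ = (∫ ω, (g ω) ^ 2 ∂μ) - Eg ^ 2 := by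
    have heq : (fun ω => (u ω) ^ 2) =
        fun ω => ((g ω) ^ 2 + Eg ^ 2) - (2 * Eg) * g ω := by
      funext ω; simp only [hu]; ring
    have h1 : Integrable (fun ω => (g ω) ^ 2 + Eg ^ 2) μ :=
      hg2_int.add (integrable_const _)
    have h2 : Integrable (fun ω => (2 * Eg) * g ω) μ := hg_int.const_mul _
    rw [heq, integral_sub h1 h2, integral_add hg2_int (integrable_const _),
      integral_const, integral_const_mul]
    simp [hEgdef]
    ring
  -- ∫ v² = p - p²
  have hv2 : ∫ ω, (v ω) ^ 2 ∂μ = p - p ^ 2 := by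
    have heq : (fun ω => (v ω) ^ 2) =
        fun ω => (1 - 2 * p) * i ω + p ^ 2 := by
      funext ω
      by_cases hω : ω ∈ A <;> simp [hv, hi_eval, hω] <;> ring
    rw [heq, integral_add (hi_int.const_mul _) (integrable_const _),
      integral_const_mul, hIint, integral_const]
    simp
    ring
  -- Cauchy-Schwarz
  have hcs := cs_integral μ u v huL2 hvL2
  have hsv : Real.sqrt (∫ ω, (v ω) ^ 2 ∂μ) ≤ 1 / 2 := by
    rw [hv2]
    have : p - p ^ 2 ≤ 1 / 4 := by nlinarith [sq_nonneg (p - 1/2)]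
    calc Real.sqrt (p - p ^ 2) ≤ Real.sqrt (1/4) := Real.sqrt_le_sqrt this
      _ = 1 / 2 := by
        rw [show (1/4 : ℝ) = (1/2)^2 by norm_num, Real.sqrt_sq (by norm_num)]
  have hkey : p * Eg - ∫ ω in A, g ω ∂μ ≤
      (1 / 2) * Real.sqrt ((∫ ω, (g ω) ^ 2 ∂μ) - Eg ^ 2) := by
    rw [← huv]
    calc ∫ ω, u ω * v ω ∂μ
        ≤ Real.sqrt (∫ ω, (u ω) ^ 2 ∂μ) * Real.sqrt (∫ ω, (v ω) ^ 2 ∂μ) := hcs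
      _ ≤ Real.sqrt (∫ ω, (u ω) ^ 2 ∂μ) * (1/2) :=
          mul_le_mul_of_nonneg_left hsv (Real.sqrt_nonneg _)
      _ = (1/2) * Real.sqrt ((∫ ω, (g ω) ^ 2 ∂μ) - Eg ^ 2) := by
          rw [hu2]; ring
  rw [le_div_iff₀ hEgpos]
  linarith [hstep1, hkey]
end

section
/- Let C be a symmetric positive-definite p×p real matrix and n > 0. The function Σ ↦ trace(Σ⁻¹ C) + n·log det(Σ), defined on symmetric positive-definite p×p matrices Σ, attains its unique global minimum at Σ* = n⁻¹·C, with minimum value n·p + n·log det(n⁻¹ C). -/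
open Matrix

set_option linter.unusedVariables false

lemma aux_scalar_le {n x : ℝ} (hn : 0 < n) (hx : 0 < x) :
    n - n * Real.log n ≤ x - n * Real.log x := by
  have h := Real.log_le_sub_one_of_pos (show 0 < x / n by positivity)
  rw [Real.log_div hx.ne' hn.ne'] at h
  have h2 := mul_le_mul_of_nonneg_left h hn.le
  have h3 : n * (x / n - 1) = x - n := by field_simp
  rw [h3, mul_sub] at h2
  linarith

lemma aux_scalar_eq {n x : ℝ} (hn : 0 < n) (hx : 0 < x)
    (h : x - n * Real.log x = n - n * Real.log n) : x = n := by
  by_contra hne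
  have hq : x / n ≠ 1 := by
    rw [Ne, div_eq_one_iff_eq hn.ne']; exact hne
  have h2 := Real.log_lt_sub_one_of_pos (show 0 < x / n by positivity) hq
  rw [Real.log_div hx.ne' hn.ne'] at h2
  have h3 := mul_lt_mul_of_pos_left h2 hn
  have h4 : n * (x / n - 1) = x - n := by field_simp
  rw [h4, mul_sub] at h3
  linarith

lemma aux_matrix {p : ℕ} {n : ℝ} (hn : 0 < n)
    {A : Matrix (Fin p) (Fin p) ℝ} (hA : A.PosDef) :
    (n * p - n * (p * Real.log n) ≤ A.trace - n * Real.log A.det) ∧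
    (A.trace - n * Real.log A.det = n * p - n * (p * Real.log n) ↔
      A = n • (1 : Matrix (Fin p) (Fin p) ℝ)) := by
  set lam := hA.1.eigenvalues with hlam
  have hpos : ∀ i, 0 < lam i := fun i => hA.eigenvalues_pos i
  have hU1 : (hA.1.eigenvectorUnitary : Matrix (Fin p) (Fin p) ℝ) *
      star (hA.1.eigenvectorUnitary : Matrix (Fin p) (Fin p) ℝ) = 1 :=
    (Matrix.mem_unitaryGroup_iff).mp (hA.1.eigenvectorUnitary).2
  have hU2 : star (hA.1.eigenvectorUnitary : Matrix (Fin p) (Fin p) ℝ) *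
      (hA.1.eigenvectorUnitary : Matrix (Fin p) (Fin p) ℝ) = 1 :=
    (Matrix.mem_unitaryGroup_iff').mp (hA.1.eigenvectorUnitary).2
  have htr : A.trace = ∑ i, lam i := by
    conv_lhs => rw [hA.1.spectral_theorem]
    simp only [Unitary.conjStarAlgAut_apply, Unitary.coe_star]
    rw [Matrix.trace_mul_cycle, hU2, Matrix.one_mul]
    simp [Matrix.trace_diagonal]
    rfl
  have hdet : A.det = ∏ i, lam i := by
    simpa using hA.1.det_eq_prod_eigenvalues
  have hlog : Real.log A.det = ∑ i, Real.log (lam i) := by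
    rw [hdet, Real.log_prod]
    intro i _; exact (hpos i).ne'
  have hrw : A.trace - n * Real.log A.det = ∑ i, (lam i - n * Real.log (lam i)) := by
    rw [htr, hlog, Finset.mul_sum, ← Finset.sum_sub_distrib]
  have hconst : (n * p - n * (p * Real.log n) : ℝ)
      = ∑ _i : Fin p, (n - n * Real.log n) := by
    simp [Finset.sum_const]; ring
  have hterm : ∀ i ∈ Finset.univ, n - n * Real.log n ≤ lam i - n * Real.log (lam i) :=
    fun i _ => aux_scalar_le hn (hpos i)
  constructor
  · rw [hrw, hconst]
    exact Finset.sum_le_sum hterm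
  · constructor
    · intro h
      have hsum : ∑ i, (lam i - n * Real.log (lam i)) = ∑ _i : Fin p, (n - n * Real.log n) := by
        rw [← hrw, h, hconst]
      have heach := (Finset.sum_eq_sum_iff_of_le hterm).mp hsum.symm
      have hlameq : ∀ i, lam i = n := fun i =>
        aux_scalar_eq hn (hpos i) (heach i (Finset.mem_univ i)).symm
      have hdiag : Matrix.diagonal (RCLike.ofReal ∘ lam)
          = (n • 1 : Matrix (Fin p) (Fin p) ℝ) := by
        ext i j
        simp [Matrix.diagonal_apply, Matrix.one_apply, Matrix.smul_apply, hlameq i,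
          mul_ite, mul_one, mul_zero]
      conv_lhs => rw [hA.1.spectral_theorem]
      simp only [Unitary.conjStarAlgAut_apply, Unitary.coe_star]
      rw [hdiag, Matrix.mul_smul, Matrix.smul_mul, Matrix.mul_one, hU1]
    · intro h
      subst h
      have h1 : (n • (1 : Matrix (Fin p) (Fin p) ℝ)).trace = n * p := by
        simp [Matrix.trace_smul, Matrix.trace_one]
      have h2 : (n • (1 : Matrix (Fin p) (Fin p) ℝ)).det = n ^ p := by
        simp [Matrix.det_smul]
      rw [h1, h2, Real.log_pow]

/-- Gaussian covariance MLE optimization: `Σ ↦ trace(Σ⁻¹C) + n·log det Σ` over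
symmetric positive-definite matrices attains its unique global minimum at
`Σ* = n⁻¹ • C`, with minimum value `n·p + n·log det(n⁻¹ • C)`. -/
theorem covariance_logdet_min (p : ℕ) (n : ℝ) (hn : 0 < n)
    (C : Matrix (Fin p) (Fin p) ℝ) (hC_symm : C.IsSymm) (hC_pd : C.PosDef) :
    (((n⁻¹ • C)⁻¹ * C).trace + n * Real.log ((n⁻¹ • C).det)
        = n * p + n * Real.log ((n⁻¹ • C).det)) ∧
    ∀ S : Matrix (Fin p) (Fin p) ℝ, S.IsSymm → S.PosDef →
      (n * p + n * Real.log ((n⁻¹ • C).det) ≤ (S⁻¹ * C).trace + n * Real.log S.det ∧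
        ((S⁻¹ * C).trace + n * Real.log S.det = n * p + n * Real.log ((n⁻¹ • C).det)
          ↔ S = n⁻¹ • C)) := by
  have hCdet : 0 < C.det := hC_pd.det_pos
  have hCdetne : C.det ≠ 0 := hCdet.ne'
  have hCunit : IsUnit C.det := isUnit_iff_ne_zero.mpr hCdetne
  set R := cfc Real.sqrt C with hRdef
  have hRH : R.IsHermitian :=
    Matrix.isHermitian_iff_isSelfAdjoint.mpr (cfc_predicate Real.sqrt C)
  have hRR : R * R = C := by
    rw [hRdef, ← cfc_mul Real.sqrt Real.sqrt C]
    conv_rhs => rw [← cfc_id' ℝ C]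
    apply cfc_congr
    intro x hx
    rw [hC_pd.posSemidef.1.spectrum_real_eq_range_eigenvalues] at hx
    obtain ⟨i, rfl⟩ := hx
    exact Real.mul_self_sqrt (hC_pd.posSemidef.eigenvalues_nonneg i)
  have hRdetsq : R.det * R.det = C.det := by rw [← Matrix.det_mul, hRR]
  have hRdet : R.det ≠ 0 := by
    intro h; rw [h, mul_zero] at hRdetsq; exact hCdetne hRdetsq.symm
  have hRunit : IsUnit R.det := isUnit_iff_ne_zero.mpr hRdet
  have hRinv : R * R⁻¹ = 1 := Matrix.mul_nonsing_inv R hRunit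
  have hinvR : R⁻¹ * R = 1 := Matrix.nonsing_inv_mul R hRunit
  have hCinv : C⁻¹ = R⁻¹ * R⁻¹ := by rw [← hRR, Matrix.mul_inv_rev]
  have hRsymm : Rᵀ = R := by
    rw [← Matrix.conjTranspose_eq_transpose_of_trivial, hRH.eq]
  have hNC : (n⁻¹ • C)⁻¹ = n • C⁻¹ := by
    apply Matrix.inv_eq_right_inv
    rw [Matrix.smul_mul, Matrix.mul_smul, smul_smul, Matrix.mul_nonsing_inv C hCunit,
      inv_mul_cancel₀ hn.ne', one_smul]
  have hNCdet : IsUnit (n⁻¹ • C).det := by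
    rw [Matrix.det_smul]
    exact isUnit_iff_ne_zero.mpr (by positivity)
  have hval : n * p + n * Real.log ((n⁻¹ • C).det)
      = (n * p - n * (p * Real.log n)) + n * Real.log C.det := by
    rw [Matrix.det_smul, Fintype.card_fin,
      Real.log_mul (pow_ne_zero _ (inv_ne_zero hn.ne')) hCdetne,
      Real.log_pow, Real.log_inv]
    ring
  constructor
  · have h1 : ((n⁻¹ • C)⁻¹ * C).trace = n * p := by
      rw [hNC, Matrix.smul_mul, Matrix.nonsing_inv_mul C hCunit]
      simp [Matrix.trace_smul, Matrix.trace_one]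
    rw [h1]
  · intro S hS_symm hS_pd
    have hSdet : 0 < S.det := hS_pd.det_pos
    have hSunit : IsUnit S.det := isUnit_iff_ne_zero.mpr hSdet.ne'
    have hSinv_pd : S⁻¹.PosDef := hS_pd.inv
    set A := R * S⁻¹ * R with hAdef
    have hA_pd : A.PosDef := by
      refine Matrix.PosDef.of_dotProduct_mulVec_pos ?_ ?_
      · show Aᴴ = A
        rw [hAdef, Matrix.conjTranspose_mul, Matrix.conjTranspose_mul, hRH.eq,
          hSinv_pd.1.eq, Matrix.mul_assoc]
      · intro x hx
        have hy : R *ᵥ x ≠ 0 := by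
          intro h
          apply hx
          have hinj : Function.Injective R.mulVec :=
            Matrix.mulVec_injective_iff_isUnit.mpr (Matrix.isUnit_iff_isUnit_det R |>.mpr hRunit)
          have : R *ᵥ x = R *ᵥ 0 := by rw [h, Matrix.mulVec_zero]
          exact hinj this
        have hxR : x ᵥ* R = R *ᵥ x := by
          conv_lhs => rw [← hRsymm]
          rw [Matrix.vecMul_transpose]
        have hkey := hSinv_pd.dotProduct_mulVec_pos hy
        simp only [star_trivial] at hkey ⊢
        rw [hAdef, ← Matrix.mulVec_mulVec, ← Matrix.mulVec_mulVec,
          Matrix.dotProduct_mulVec, hxR]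
        exact hkey
    have htrA : A.trace = (S⁻¹ * C).trace := by
      rw [hAdef, Matrix.trace_mul_cycle, hRR, Matrix.trace_mul_comm]
    have hdetA : Real.log A.det = Real.log C.det - Real.log S.det := by
      have : A.det = C.det * S.det⁻¹ := by
        rw [hAdef, Matrix.det_mul, Matrix.det_mul, Matrix.det_nonsing_inv,
          Ring.inverse_eq_inv]
        rw [show R.det * S.det⁻¹ * R.det = R.det * R.det * S.det⁻¹ by ring, hRdetsq]
      rw [this, Real.log_mul hCdetne (inv_ne_zero hSdet.ne'), Real.log_inv]
      ring
    have hre : (S⁻¹ * C).trace + n * Real.log S.det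
        = (A.trace - n * Real.log A.det) + n * Real.log C.det := by
      rw [htrA, hdetA]; ring
    obtain ⟨hineq, hiff⟩ := aux_matrix hn hA_pd
    constructor
    · rw [hval, hre]; linarith
    · constructor
      · intro heq
        have hAeq : A = n • (1 : Matrix (Fin p) (Fin p) ℝ) := by
          apply hiff.mp
          rw [hre, hval] at heq
          linarith
        have h5 : R⁻¹ * A * R⁻¹ = S⁻¹ := by
          rw [hAdef]
          simp only [Matrix.mul_assoc]
          rw [hRinv, Matrix.mul_one, ← Matrix.mul_assoc, hinvR, Matrix.one_mul]
        have hSinv : S⁻¹ = (n⁻¹ • C)⁻¹ := by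
          rw [← h5, hAeq, hNC, Matrix.mul_smul, Matrix.mul_one, Matrix.smul_mul, hCinv]
        calc S = (S⁻¹)⁻¹ := (Matrix.nonsing_inv_nonsing_inv S hSunit).symm
          _ = ((n⁻¹ • C)⁻¹)⁻¹ := by rw [hSinv]
          _ = n⁻¹ • C := Matrix.nonsing_inv_nonsing_inv _ hNCdet
      · intro hS
        have h6 : R * C⁻¹ * R = 1 := by
          rw [hCinv]
          simp only [Matrix.mul_assoc]
          rw [hinvR, Matrix.mul_one, hRinv]
        have hAeq : A = n • (1 : Matrix (Fin p) (Fin p) ℝ) := by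
          rw [hAdef, hS, hNC, Matrix.mul_smul, Matrix.smul_mul, h6]
        have := hiff.mpr hAeq
        rw [hre, hval]
        linarith
end

section
/- Consider the weighted K-means objective d(z, μ, Σ) = Σ_{g∈G} Σ_{i : z(i)=g} [(xᵢ − μ_g)ᵀ Σ_g⁻¹ (xᵢ − μ_g) + log det(Σ_g)]. Fix an assignment z and suppose each group g has N_g = #{i : z(i)=g} ≥ 1 points, with updated centroid μ_g' = (1/N_g)·Σ_{z(i)=g} xᵢ and updated covariance Σ_g' = (1/N_g)·Σ_{z(i)=g} (xᵢ − μ_g')(xᵢ − μ_g')ᵀ. If every Σ_g' is positive-definite, then d(z, μ', Σ') ≤ d(z, μ, Σ) for any initial (μ, Σ) with each Σ_g positive-definite. -/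
open Matrix Finset

section WKMHelpers
variable {p : ℕ} {ι : Type*}
open scoped MatrixOrder


lemma wkm_dot_trace (C : Matrix (Fin p) (Fin p) ℝ) (v : Fin p → ℝ) :
    v ⬝ᵥ C *ᵥ v = (C * vecMulVec v v).trace := by
  simp only [trace, diag_apply, Matrix.mul_apply, vecMulVec_apply, dotProduct, mulVec,
    Finset.mul_sum]
  exact Finset.sum_congr rfl fun i _ => Finset.sum_congr rfl fun j _ => by ring

lemma wkm_sum_dot (s : Finset ι) (f : ι → Fin p → ℝ) (w : Fin p → ℝ) :
    (∑ i ∈ s, f i) ⬝ᵥ w = ∑ i ∈ s, f i ⬝ᵥ w := by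
  simp only [dotProduct, Finset.sum_apply, Finset.sum_mul]
  exact Finset.sum_comm

lemma wkm_dot_sum (s : Finset ι) (w : Fin p → ℝ) (f : ι → Fin p → ℝ) :
    w ⬝ᵥ (∑ i ∈ s, f i) = ∑ i ∈ s, w ⬝ᵥ f i := by
  simp only [dotProduct, Finset.sum_apply, Finset.mul_sum]
  exact Finset.sum_comm

lemma wkm_mulVec_sum (s : Finset ι) (C : Matrix (Fin p) (Fin p) ℝ) (f : ι → Fin p → ℝ) :
    C *ᵥ (∑ i ∈ s, f i) = ∑ i ∈ s, C *ᵥ f i :=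
  map_sum C.mulVecLin f s

lemma wkm_trace_eq_sum_eigs {A : Matrix (Fin p) (Fin p) ℝ} (hA : A.IsHermitian) :
    A.trace = ∑ i, hA.eigenvalues i := by
  conv_lhs => rw [hA.spectral_theorem]
  rw [Unitary.conjStarAlgAut_apply, trace_mul_cycle, Unitary.coe_star_mul_self, one_mul, trace_diagonal]
  simp

lemma wkm_dot_conj {B C : Matrix (Fin p) (Fin p) ℝ} (hBt : Bᵀ = B) (v : Fin p → ℝ) :
    v ⬝ᵥ (B * C * B) *ᵥ v = (B *ᵥ v) ⬝ᵥ C *ᵥ (B *ᵥ v) := by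
  have h1 : (B * C * B) *ᵥ v = B *ᵥ (C *ᵥ (B *ᵥ v)) := by
    rw [mulVec_mulVec, mulVec_mulVec]
  rw [h1, dotProduct_mulVec, ← mulVec_transpose, hBt]

lemma wkm_posDef_conj {B C : Matrix (Fin p) (Fin p) ℝ} (hC : C.PosDef)
    (hB : B.IsHermitian) (hBdet : IsUnit B.det) : (B * C * B).PosDef := by
  have hBt : Bᵀ = B := by
    rw [← conjTranspose_eq_transpose_of_trivial]; exact hB
  refine PosDef.of_dotProduct_mulVec_pos ?_ ?_
  · show (B * C * B)ᴴ = B * C * B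
    rw [conjTranspose_mul, conjTranspose_mul, hB.eq, hC.1.eq, ← mul_assoc]
  · intro v hv
    have hy : B *ᵥ v ≠ 0 := by
      intro h
      have hinj : Function.Injective B.mulVec :=
        mulVec_injective_iff_isUnit.mpr ((isUnit_iff_isUnit_det B).mpr hBdet)
      exact hv (hinj (by simpa using h))
    have := hC.dotProduct_mulVec_pos hy
    simp only [star_trivial] at this ⊢
    rw [wkm_dot_conj hBt]
    exact this

/-- log det M ≤ trace M - p for posdef M -/
lemma wkm_logdet_le {M : Matrix (Fin p) (Fin p) ℝ} (hM : M.PosDef) :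
    Real.log M.det ≤ M.trace - p := by
  have hev := hM.eigenvalues_pos
  have hdet : M.det = ∏ i, hM.1.eigenvalues i := by
    simpa using hM.1.det_eq_prod_eigenvalues
  have hlog : Real.log M.det = ∑ i, Real.log (hM.1.eigenvalues i) := by
    rw [hdet, Real.log_prod]
    exact fun i _ => (hev i).ne'
  rw [hlog, wkm_trace_eq_sum_eigs hM.1]
  have : ∀ i : Fin p, Real.log (hM.1.eigenvalues i) ≤ hM.1.eigenvalues i - 1 :=
    fun i => Real.log_le_sub_one_of_pos (hev i)
  calc ∑ i, Real.log (hM.1.eigenvalues i) ≤ ∑ i : Fin p, (hM.1.eigenvalues i - 1) :=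
        Finset.sum_le_sum fun i _ => this i
    _ = (∑ i, hM.1.eigenvalues i) - p := by
        rw [Finset.sum_sub_distrib]; simp

/-- Key Gaussian MLE inequality. -/
lemma wkm_key {A B : Matrix (Fin p) (Fin p) ℝ} (hA : A.PosDef) (hB : B.PosDef) :
    (p : ℝ) + Real.log B.det ≤ (A⁻¹ * B).trace + Real.log A.det := by
  set sB := CFC.sqrt B with hsB
  have hsH : sB.IsHermitian := (CFC.sqrt_nonneg B).posSemidef.1
  have hsq : sB * sB = B := CFC.sqrt_mul_sqrt_self B hB.posSemidef.nonneg
  have hdetsq : sB.det * sB.det = B.det := by rw [← det_mul, hsq]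
  have hdet_ne : sB.det ≠ 0 := by
    intro h; rw [h, mul_zero] at hdetsq; exact hB.det_pos.ne' hdetsq.symm
  have hM : (sB * A⁻¹ * sB).PosDef :=
    wkm_posDef_conj hA.inv hsH (isUnit_iff_ne_zero.mpr hdet_ne)
  have htr : (sB * A⁻¹ * sB).trace = (A⁻¹ * B).trace := by
    rw [trace_mul_cycle, hsq, trace_mul_comm]
  have hdetM : (sB * A⁻¹ * sB).det = A⁻¹.det * B.det := by
    rw [det_mul, det_mul, ← hdetsq]; ring
  have hlogM : Real.log (sB * A⁻¹ * sB).det = Real.log B.det - Real.log A.det := by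
    rw [hdetM, Real.log_mul (by
        rw [det_nonsing_inv]
        simpa using (hA.det_pos.ne')
      ) hB.det_pos.ne', det_nonsing_inv]
    rw [Ring.inverse_eq_inv, Real.log_inv]
    ring
  have := wkm_logdet_le hM
  rw [hlogM, htr] at this
  linarith

end WKMHelpers

/-- Estimation-step monotonicity (Lemma 1) of the weighted K-means algorithm:
updating each group's mean to the group sample mean and each covariance to the
group sample covariance never increases the total penalized squared
Mahalanobis distance, provided the updated covariances are positive-definite. -/
theorem estimation_step_monotone
    (p N : ℕ) {G : Type*} [Fintype G] [DecidableEq G]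
    (x : Fin N → Fin p → ℝ) (z : Fin N → G)
    (μ μ' : G → Fin p → ℝ) (Sg Sg' : G → Matrix (Fin p) (Fin p) ℝ)
    (hSymm : ∀ g, (Sg g).IsSymm) (hPd : ∀ g, (Sg g).PosDef)
    (Ng : G → ℕ) (hNg : ∀ g, Ng g = (univ.filter fun i => z i = g).card)
    (hNg_pos : ∀ g, 1 ≤ Ng g)
    (hμ' : ∀ g, μ' g = (Ng g : ℝ)⁻¹ • ∑ i ∈ univ.filter (fun i => z i = g), x i)
    (hSg' : ∀ g, Sg' g = (Ng g : ℝ)⁻¹ •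
        ∑ i ∈ univ.filter (fun i => z i = g),
          vecMulVec (x i - μ' g) (x i - μ' g))
    (hPd' : ∀ g, (Sg' g).PosDef) :
    ∑ i, ((x i - μ' (z i)) ⬝ᵥ (Sg' (z i))⁻¹ *ᵥ (x i - μ' (z i))
        + Real.log (Sg' (z i)).det)
      ≤ ∑ i, ((x i - μ (z i)) ⬝ᵥ (Sg (z i))⁻¹ *ᵥ (x i - μ (z i))
        + Real.log (Sg (z i)).det) := by
  have group_le : ∀ g : G,
      ∑ i ∈ univ.filter (fun i => z i = g),
        ((x i - μ' g) ⬝ᵥ (Sg' g)⁻¹ *ᵥ (x i - μ' g) + Real.log (Sg' g).det)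
      ≤ ∑ i ∈ univ.filter (fun i => z i = g),
        ((x i - μ g) ⬝ᵥ (Sg g)⁻¹ *ᵥ (x i - μ g) + Real.log (Sg g).det) := by
    intro g
    set s : Finset (Fin N) := univ.filter (fun i => z i = g) with hs
    set A := Sg g
    set B := Sg' g
    have hApd : A.PosDef := hPd g
    have hBpd : B.PosDef := hPd' g
    have hn : (0:ℝ) < (Ng g : ℝ) := by
      exact_mod_cast Nat.lt_of_lt_of_le Nat.zero_lt_one (hNg_pos g)
    have hcard : s.card = Ng g := (hNg g).symm
    -- centering
    have hsum0 : ∑ i ∈ s, (x i - μ' g) = 0 := by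
      rw [Finset.sum_sub_distrib, Finset.sum_const, hcard, hμ' g,
        ← Nat.cast_smul_eq_nsmul ℝ, smul_smul, mul_inv_cancel₀ hn.ne', one_smul, sub_self]
    -- second moment
    have hvv : ∑ i ∈ s, vecMulVec (x i - μ' g) (x i - μ' g) = (Ng g : ℝ) • B := by
      rw [show B = Sg' g from rfl, hSg' g, smul_smul, mul_inv_cancel₀ hn.ne', one_smul]
    -- trace identity
    have htr : ∀ C : Matrix (Fin p) (Fin p) ℝ,
        ∑ i ∈ s, (x i - μ' g) ⬝ᵥ C *ᵥ (x i - μ' g) = (Ng g : ℝ) * (C * B).trace := by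
      intro C
      calc ∑ i ∈ s, (x i - μ' g) ⬝ᵥ C *ᵥ (x i - μ' g)
          = ∑ i ∈ s, (C * vecMulVec (x i - μ' g) (x i - μ' g)).trace := by
            exact Finset.sum_congr rfl fun i _ => wkm_dot_trace _ _
        _ = (∑ i ∈ s, C * vecMulVec (x i - μ' g) (x i - μ' g)).trace :=
            (trace_sum _ _).symm
        _ = (C * ((Ng g : ℝ) • B)).trace := by rw [← Finset.mul_sum, hvv]
        _ = (Ng g : ℝ) * (C * B).trace := by
            rw [Matrix.mul_smul, trace_smul, smul_eq_mul]
    -- mean step inequality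
    have hmean : ∑ i ∈ s, (x i - μ' g) ⬝ᵥ A⁻¹ *ᵥ (x i - μ' g)
        ≤ ∑ i ∈ s, (x i - μ g) ⬝ᵥ A⁻¹ *ᵥ (x i - μ g) := by
      set c : Fin p → ℝ := μ' g - μ g with hc
      have hexp : ∑ i ∈ s, (x i - μ g) ⬝ᵥ A⁻¹ *ᵥ (x i - μ g)
          = (∑ i ∈ s, (x i - μ' g) ⬝ᵥ A⁻¹ *ᵥ (x i - μ' g))
            + ((∑ i ∈ s, (x i - μ' g)) ⬝ᵥ A⁻¹ *ᵥ c
            + (c ⬝ᵥ A⁻¹ *ᵥ (∑ i ∈ s, (x i - μ' g))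
            + s.card • (c ⬝ᵥ A⁻¹ *ᵥ c))) := by
        have h1 : ∀ i ∈ s, (x i - μ g) ⬝ᵥ A⁻¹ *ᵥ (x i - μ g)
            = (x i - μ' g) ⬝ᵥ A⁻¹ *ᵥ (x i - μ' g)
              + ((x i - μ' g) ⬝ᵥ A⁻¹ *ᵥ c
              + (c ⬝ᵥ A⁻¹ *ᵥ (x i - μ' g) + c ⬝ᵥ A⁻¹ *ᵥ c)) := by
          intro i _
          have : x i - μ g = (x i - μ' g) + c := by rw [hc, sub_add_sub_cancel]
          rw [this, mulVec_add, dotProduct_add, add_dotProduct, add_dotProduct]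
          ring
        rw [Finset.sum_congr rfl h1, Finset.sum_add_distrib, Finset.sum_add_distrib,
          Finset.sum_add_distrib, Finset.sum_const, wkm_sum_dot,
          wkm_mulVec_sum s A⁻¹ (fun i => x i - μ' g), wkm_dot_sum]
      have hcc : 0 ≤ c ⬝ᵥ A⁻¹ *ᵥ c := by
        have := (hApd.inv.posSemidef).dotProduct_mulVec_nonneg c
        simpa using this
      rw [hexp, hsum0]
      simp only [zero_dotProduct, mulVec_zero, dotProduct_zero, zero_add]
      have : 0 ≤ (s.card : ℝ) • (c ⬝ᵥ A⁻¹ *ᵥ c) :=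
        smul_nonneg (Nat.cast_nonneg _) hcc
      rw [← Nat.cast_smul_eq_nsmul ℝ]
      linarith
    -- assembling
    have hBinv : B⁻¹ * B = 1 :=
      nonsing_inv_mul B (isUnit_iff_ne_zero.mpr hBpd.det_pos.ne')
    have hLHS : ∑ i ∈ s, ((x i - μ' g) ⬝ᵥ B⁻¹ *ᵥ (x i - μ' g) + Real.log B.det)
        = (Ng g : ℝ) * ((p : ℝ) + Real.log B.det) := by
      rw [Finset.sum_add_distrib, Finset.sum_const, htr B⁻¹, hBinv, trace_one, hcard,
        nsmul_eq_mul, Fintype.card_fin]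
      ring
    have hMid : ∑ i ∈ s, ((x i - μ' g) ⬝ᵥ A⁻¹ *ᵥ (x i - μ' g) + Real.log A.det)
        = (Ng g : ℝ) * ((A⁻¹ * B).trace + Real.log A.det) := by
      rw [Finset.sum_add_distrib, Finset.sum_const, htr A⁻¹, hcard, nsmul_eq_mul]
      ring
    calc ∑ i ∈ s, ((x i - μ' g) ⬝ᵥ B⁻¹ *ᵥ (x i - μ' g) + Real.log B.det)
        = (Ng g : ℝ) * ((p : ℝ) + Real.log B.det) := hLHS
      _ ≤ (Ng g : ℝ) * ((A⁻¹ * B).trace + Real.log A.det) :=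
          mul_le_mul_of_nonneg_left (wkm_key hApd hBpd) hn.le
      _ = ∑ i ∈ s, ((x i - μ' g) ⬝ᵥ A⁻¹ *ᵥ (x i - μ' g) + Real.log A.det) := hMid.symm
      _ ≤ ∑ i ∈ s, ((x i - μ g) ⬝ᵥ A⁻¹ *ᵥ (x i - μ g) + Real.log A.det) := by
          rw [Finset.sum_add_distrib, Finset.sum_add_distrib]
          exact add_le_add_left hmean _
  calc ∑ i, ((x i - μ' (z i)) ⬝ᵥ (Sg' (z i))⁻¹ *ᵥ (x i - μ' (z i))
        + Real.log (Sg' (z i)).det)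
      = ∑ g : G, ∑ i ∈ univ.filter (fun i => z i = g),
          ((x i - μ' (z i)) ⬝ᵥ (Sg' (z i))⁻¹ *ᵥ (x i - μ' (z i))
            + Real.log (Sg' (z i)).det) := (Finset.sum_fiberwise _ _ _).symm
    _ = ∑ g : G, ∑ i ∈ univ.filter (fun i => z i = g),
          ((x i - μ' g) ⬝ᵥ (Sg' g)⁻¹ *ᵥ (x i - μ' g) + Real.log (Sg' g).det) := by
        refine Finset.sum_congr rfl fun g _ => Finset.sum_congr rfl fun i hi => ?_
        rw [(Finset.mem_filter.mp hi).2]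
    _ ≤ ∑ g : G, ∑ i ∈ univ.filter (fun i => z i = g),
          ((x i - μ g) ⬝ᵥ (Sg g)⁻¹ *ᵥ (x i - μ g) + Real.log (Sg g).det) :=
        Finset.sum_le_sum fun g _ => group_le g
    _ = ∑ g : G, ∑ i ∈ univ.filter (fun i => z i = g),
          ((x i - μ (z i)) ⬝ᵥ (Sg (z i))⁻¹ *ᵥ (x i - μ (z i))
            + Real.log (Sg (z i)).det) := by
        refine Finset.sum_congr rfl fun g _ => Finset.sum_congr rfl fun i hi => ?_
        rw [(Finset.mem_filter.mp hi).2]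
    _ = ∑ i, ((x i - μ (z i)) ⬝ᵥ (Sg (z i))⁻¹ *ᵥ (x i - μ (z i))
        + Real.log (Sg (z i)).det) := Finset.sum_fiberwise _ _ _
end
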